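/- The polynomial X^9 − 9X^8 + 24X^6 + 18X^5 + 3X^3 − 9X^2 − 1 is irreducible over ℚ. -/
import Mathlib

open Polynomial

noncomputable def zf : ℤ[X] :=
  X ^ 9 - 9 * X ^ 8 + 24 * X ^ 6 + 18 * X ^ 5 + 3 * X ^ 3 - 9 * X ^ 2 - 1

lemma zf_monic : zf.Monic := by unfold zf; monicity!

lemma zf_natDegree : zf.natDegree = 9 := by unfold zf; compute_degree!

lemma zf_eval (n : ℤ) :
    zf.eval n = n ^ 9 - 9 * n ^ 8 + 24 * n ^ 6 + 18 * n ^ 5 + 3 * n ^ 3 - 9 * n ^ 2 - 1 := by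
  simp [zf]

-- divisor classification lemmas
lemma nd17 (n : ℕ) (h : n ∣ 17) : n = 1 ∨ n = 17 :=
  (by norm_num : Nat.Prime 17).eq_one_or_self_of_dvd n h

lemma nd307 (n : ℕ) (h : n ∣ 307) : n = 1 ∨ n = 307 :=
  (by norm_num : Nat.Prime 307).eq_one_or_self_of_dvd n h

lemma nd17497 (n : ℕ) (h : n ∣ 17497) : n = 1 ∨ n = 17497 :=
  (by norm_num : Nat.Prime 17497).eq_one_or_self_of_dvd n h

lemma nd27 (n : ℕ) (h : n ∣ 27) : n = 1 ∨ n = 3 ∨ n = 9 ∨ n = 27 := by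
  have h3 : Nat.Prime 3 := by norm_num
  have h' : n ∣ 3 ^ 3 := by norm_num at h ⊢; exact h
  obtain ⟨m, hm, rfl⟩ := (Nat.dvd_prime_pow h3).mp h'
  interval_cases m <;> norm_num

lemma nd1917 (n : ℕ) (h : n ∣ 1917) : n = 1 ∨ n = 3 ∨ n = 9 ∨ n = 27 ∨
    n = 71 ∨ n = 213 ∨ n = 639 ∨ n = 1917 := by
  have h' : n ∣ 27 * 71 := by norm_num at h ⊢; exact h
  obtain ⟨d1, d2, h1, h2, rfl⟩ := exists_dvd_and_dvd_of_dvd_mul h'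
  rcases nd27 _ h1 with rfl | rfl | rfl | rfl <;>
    rcases (by norm_num : Nat.Prime 71).eq_one_or_self_of_dvd _ h2 with rfl | rfl <;> norm_num

lemma id27 (d : ℤ) (h : d ∣ 27) : d.natAbs = 1 ∨ d.natAbs = 3 ∨ d.natAbs = 9 ∨ d.natAbs = 27 :=
  nd27 _ (Int.natAbs_dvd_natAbs.mpr h)
lemma id17 (d : ℤ) (h : d ∣ 17) : d.natAbs = 1 ∨ d.natAbs = 17 :=
  nd17 _ (Int.natAbs_dvd_natAbs.mpr h)
lemma id307 (d : ℤ) (h : d ∣ 307) : d.natAbs = 1 ∨ d.natAbs = 307 :=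
  nd307 _ (Int.natAbs_dvd_natAbs.mpr h)
lemma id1917 (d : ℤ) (h : d ∣ 1917) : d.natAbs = 1 ∨ d.natAbs = 3 ∨ d.natAbs = 9 ∨
    d.natAbs = 27 ∨ d.natAbs = 71 ∨ d.natAbs = 213 ∨ d.natAbs = 639 ∨ d.natAbs = 1917 :=
  nd1917 _ (Int.natAbs_dvd_natAbs.mpr h)
lemma id17497 (d : ℤ) (h : d ∣ 17497) : d.natAbs = 1 ∨ d.natAbs = 17497 :=
  nd17497 _ (Int.natAbs_dvd_natAbs.mpr h)

-- arithmetic contradiction lemmas (coefficients of a putative monic factor)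
lemma arith1 (c0 : ℤ)
    (h0 : (c0 + 0) ∣ (-1 : ℤ))
    (h1 : (c0 + 1) ∣ (27 : ℤ))
    (h2 : (c0 + -1) ∣ (-17 : ℤ)) : False := by
  rw [dvd_neg] at h0 h2
  have H1 := id27 _ h1
  have H2 := id17 _ h2
  have H0 : c0 + 0 = 1 ∨ c0 + 0 = -1 := Int.isUnit_iff.mp (isUnit_of_dvd_one h0)
  omega

set_option maxHeartbeats 2000000 in
lemma arith2 (c0 c1 : ℤ)
    (h0 : (c0 + c1 * 0 + 0 ^ 2) ∣ (-1 : ℤ))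
    (h1 : (c0 + c1 * 1 + 1 ^ 2) ∣ (27 : ℤ))
    (h2 : (c0 + c1 * (-1) + (-1) ^ 2) ∣ (-17 : ℤ))
    (h3 : (c0 + c1 * 2 + 2 ^ 2) ∣ (307 : ℤ))
    (h4 : (c0 + c1 * (-2) + (-2) ^ 2) ∣ (-1917 : ℤ))
    (h5 : (c0 + c1 * 3 + 3 ^ 2) ∣ (-17497 : ℤ)) : False := by
  rw [dvd_neg] at h0 h2 h4 h5
  ring_nf at h0 h1 h2 h3 h4 h5
  have H0 : _ ∨ _ := Int.isUnit_iff.mp (isUnit_of_dvd_one h0)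
  have H1 := id27 _ h1
  have H2 := id17 _ h2
  have H3 := id307 _ h3
  have H4 := id1917 _ h4
  have H5 := id17497 _ h5
  omega

set_option maxHeartbeats 2000000 in
lemma arith3 (c0 c1 c2 : ℤ)
    (h0 : (c0 + c1 * 0 + c2 * 0 ^ 2 + 0 ^ 3) ∣ (-1 : ℤ))
    (h1 : (c0 + c1 * 1 + c2 * 1 ^ 2 + 1 ^ 3) ∣ (27 : ℤ))
    (h2 : (c0 + c1 * (-1) + c2 * (-1) ^ 2 + (-1) ^ 3) ∣ (-17 : ℤ))
    (h3 : (c0 + c1 * 2 + c2 * 2 ^ 2 + 2 ^ 3) ∣ (307 : ℤ))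
    (h4 : (c0 + c1 * (-2) + c2 * (-2) ^ 2 + (-2) ^ 3) ∣ (-1917 : ℤ))
    (h5 : (c0 + c1 * 3 + c2 * 3 ^ 2 + 3 ^ 3) ∣ (-17497 : ℤ)) : False := by
  rw [dvd_neg] at h0 h2 h4 h5
  ring_nf at h0 h1 h2 h3 h4 h5
  have H0 : _ ∨ _ := Int.isUnit_iff.mp (isUnit_of_dvd_one h0)
  have H1 := id27 _ h1
  have H2 := id17 _ h2
  have H3 := id307 _ h3
  have H4 := id1917 _ h4
  have H5 := id17497 _ h5
  omega

set_option maxHeartbeats 4000000 in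
lemma arith4 (c0 c1 c2 c3 : ℤ)
    (h0 : (c0 + c1 * 0 + c2 * 0 ^ 2 + c3 * 0 ^ 3 + 0 ^ 4) ∣ (-1 : ℤ))
    (h1 : (c0 + c1 * 1 + c2 * 1 ^ 2 + c3 * 1 ^ 3 + 1 ^ 4) ∣ (27 : ℤ))
    (h2 : (c0 + c1 * (-1) + c2 * (-1) ^ 2 + c3 * (-1) ^ 3 + (-1) ^ 4) ∣ (-17 : ℤ))
    (h3 : (c0 + c1 * 2 + c2 * 2 ^ 2 + c3 * 2 ^ 3 + 2 ^ 4) ∣ (307 : ℤ))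
    (h4 : (c0 + c1 * (-2) + c2 * (-2) ^ 2 + c3 * (-2) ^ 3 + (-2) ^ 4) ∣ (-1917 : ℤ))
    (h5 : (c0 + c1 * 3 + c2 * 3 ^ 2 + c3 * 3 ^ 3 + 3 ^ 4) ∣ (-17497 : ℤ)) : False := by
  rw [dvd_neg] at h0 h2 h4 h5
  ring_nf at h0 h1 h2 h3 h4 h5
  have H0 : _ ∨ _ := Int.isUnit_iff.mp (isUnit_of_dvd_one h0)
  have H1 := id27 _ h1
  have H2 := id17 _ h2
  have H3 := id307 _ h3
  have H4 := id1917 _ h4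
  have H5 := id17497 _ h5
  rcases H0 with h|h <;> rcases H1 with h'|h'|h'|h' <;> rcases H2 with h''|h'' <;>
    rcases H3 with e|e <;>
      first
      | omega
      | (rcases H4 with e'|e'|e'|e'|e'|e'|e'|e' <;>
          first | omega | (rcases H5 with e''|e'' <;> omega))

-- evaluation formulas for monic polynomials of small degree
lemma eval_d1 (g : ℤ[X]) (hm : g.Monic) (hd : g.natDegree = 1) (n : ℤ) :
    g.eval n = g.coeff 0 + n := by
  have hc := hm.coeff_natDegree
  rw [hd] at hc
  rw [Polynomial.eval_eq_sum_range, hd]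
  simp [Finset.sum_range_succ, hc]

lemma eval_d2 (g : ℤ[X]) (hm : g.Monic) (hd : g.natDegree = 2) (n : ℤ) :
    g.eval n = g.coeff 0 + g.coeff 1 * n + n ^ 2 := by
  have hc := hm.coeff_natDegree
  rw [hd] at hc
  rw [Polynomial.eval_eq_sum_range, hd]
  simp [Finset.sum_range_succ, hc]

lemma eval_d3 (g : ℤ[X]) (hm : g.Monic) (hd : g.natDegree = 3) (n : ℤ) :
    g.eval n = g.coeff 0 + g.coeff 1 * n + g.coeff 2 * n ^ 2 + n ^ 3 := by
  have hc := hm.coeff_natDegree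
  rw [hd] at hc
  rw [Polynomial.eval_eq_sum_range, hd]
  simp [Finset.sum_range_succ, hc]
  try ring

lemma eval_d4 (g : ℤ[X]) (hm : g.Monic) (hd : g.natDegree = 4) (n : ℤ) :
    g.eval n = g.coeff 0 + g.coeff 1 * n + g.coeff 2 * n ^ 2 + g.coeff 3 * n ^ 3 + n ^ 4 := by
  have hc := hm.coeff_natDegree
  rw [hd] at hc
  rw [Polynomial.eval_eq_sum_range, hd]
  simp [Finset.sum_range_succ, hc]
  try ring

lemma no_small (g h : ℤ[X]) (hm : g.Monic) (hfac : zf = g * h)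
    (hlo : 1 ≤ g.natDegree) (hhi : g.natDegree ≤ 4) : False := by
  have hdvd : ∀ n : ℤ, g.eval n ∣ zf.eval n := fun n =>
    ⟨h.eval n, by rw [hfac, Polynomial.eval_mul]⟩
  have d0 := hdvd 0
  have d1 := hdvd 1
  have dm1 := hdvd (-1)
  have d2 := hdvd 2
  have dm2 := hdvd (-2)
  have d3 := hdvd 3
  rw [show zf.eval 0 = (-1 : ℤ) from by rw [zf_eval]; norm_num] at d0
  rw [show zf.eval 1 = (27 : ℤ) from by rw [zf_eval]; norm_num] at d1
  rw [show zf.eval (-1) = (-17 : ℤ) from by rw [zf_eval]; norm_num] at dm1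
  rw [show zf.eval 2 = (307 : ℤ) from by rw [zf_eval]; norm_num] at d2
  rw [show zf.eval (-2) = (-1917 : ℤ) from by rw [zf_eval]; norm_num] at dm2
  rw [show zf.eval 3 = (-17497 : ℤ) from by rw [zf_eval]; norm_num] at d3
  have hcase : g.natDegree = 1 ∨ g.natDegree = 2 ∨ g.natDegree = 3 ∨ g.natDegree = 4 := by omega
  rcases hcase with hd | hd | hd | hd
  · have E := eval_d1 g hm hd
    exact arith1 (g.coeff 0)
      (by rw [show g.coeff 0 + 0 = g.eval 0 from by rw [E]]; exact d0)
      (by rw [show g.coeff 0 + 1 = g.eval 1 from by rw [E]]; exact d1)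
      (by rw [show g.coeff 0 + -1 = g.eval (-1) from by rw [E]]; exact dm1)
  · have E := eval_d2 g hm hd
    exact arith2 (g.coeff 0) (g.coeff 1)
      (by rw [← E 0]; exact d0) (by rw [← E 1]; exact d1) (by rw [← E (-1)]; exact dm1)
      (by rw [← E 2]; exact d2) (by rw [← E (-2)]; exact dm2) (by rw [← E 3]; exact d3)
  · have E := eval_d3 g hm hd
    exact arith3 (g.coeff 0) (g.coeff 1) (g.coeff 2)
      (by rw [← E 0]; exact d0) (by rw [← E 1]; exact d1) (by rw [← E (-1)]; exact dm1)
      (by rw [← E 2]; exact d2) (by rw [← E (-2)]; exact dm2) (by rw [← E 3]; exact d3)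
  · have E := eval_d4 g hm hd
    exact arith4 (g.coeff 0) (g.coeff 1) (g.coeff 2) (g.coeff 3)
      (by rw [← E 0]; exact d0) (by rw [← E 1]; exact d1) (by rw [← E (-1)]; exact dm1)
      (by rw [← E 2]; exact d2) (by rw [← E (-2)]; exact dm2) (by rw [← E 3]; exact d3)

lemma core (g h : ℤ[X]) (hgh : zf = g * h) (hg : g.Monic) (hh : h.Monic) :
    IsUnit g ∨ IsUnit h := by
  by_contra hcon
  push_neg at hcon
  obtain ⟨hgu, hhu⟩ := hcon
  have hgd : g.natDegree ≠ 0 := fun h0 => hgu (by rw [hg.natDegree_eq_zero.mp h0]; exact isUnit_one)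
  have hhd : h.natDegree ≠ 0 := fun h0 => hhu (by rw [hh.natDegree_eq_zero.mp h0]; exact isUnit_one)
  have hsum : g.natDegree + h.natDegree = 9 := by
    rw [← Polynomial.natDegree_mul hg.ne_zero hh.ne_zero, ← hgh, zf_natDegree]
  rcases le_or_gt g.natDegree 4 with hle | hlt
  · exact no_small g h hg hgh (by omega) hle
  · exact no_small h g hh (by rw [hgh]; ring) (by omega) (by omega)

lemma zf_irred : Irreducible zf := by
  constructor
  · intro hu
    have := Polynomial.natDegree_eq_zero_of_isUnit hu
    rw [zf_natDegree] at this
    exact absurd this (by norm_num)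
  · intro g h hgh
    have hlc : g.leadingCoeff * h.leadingCoeff = 1 := by
      rw [← Polynomial.leadingCoeff_mul, ← hgh]; exact zf_monic
    rcases Int.eq_one_or_neg_one_of_mul_eq_one' hlc with ⟨hg1, hh1⟩ | ⟨hg1, hh1⟩
    · exact core g h hgh hg1 hh1
    · have hgm : (-g).Monic := by
        unfold Polynomial.Monic
        rw [Polynomial.leadingCoeff_neg, hg1]; norm_num
      have hhm : (-h).Monic := by
        unfold Polynomial.Monic
        rw [Polynomial.leadingCoeff_neg, hh1]; norm_num
      rcases core (-g) (-h) (by rw [hgh]; ring) hgm hhm with hu | hu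
      · exact Or.inl (by simpa using hu.neg)
      · exact Or.inr (by simpa using hu.neg)

theorem stmt_8 :
    Irreducible (X ^ 9 - 9 * X ^ 8 + 24 * X ^ 6 + 18 * X ^ 5 + 3 * X ^ 3 - 9 * X ^ 2 - 1 :
      ℚ[X]) := by
  have hmap : (X ^ 9 - 9 * X ^ 8 + 24 * X ^ 6 + 18 * X ^ 5 + 3 * X ^ 3 - 9 * X ^ 2 - 1 :
      ℚ[X]) = zf.map (Int.castRingHom ℚ) := by
    simp [zf]
  rw [hmap]
  exact (Polynomial.IsPrimitive.Int.irreducible_iff_irreducible_map_cast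
    zf_monic.isPrimitive).mp zf_irred
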